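/- If the coarse structure 𝓔_𝓕 associated to a filter 𝓕 on ℕ has a countable cofinal subset (i.e., a countable family {Eₙ} such that every element of 𝓔_𝓕 is contained in some Eₙ), then 𝓕 is countably generated (there is a countable family {Aₙ} ⊆ 𝓕 such that every B ∈ 𝓕 contains some Aₙ). -/

import Mathlib

/-- The set of splitting points of `E ⊆ ℕ × ℕ`. -/
def splitPoints (E : Set (ℕ × ℕ)) : Set ℕ :=
  {n | ∀ i j : ℕ, i < n → n ≤ j → (i, j) ∉ E ∧ (j, i) ∉ E}

/-- `E` has uniformly bounded sections: it is contained in a band `{(i,j) : |i - j| ≤ k}`. -/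
def Banded (E : Set (ℕ × ℕ)) : Prop :=
  ∃ k : ℕ, ∀ p ∈ E, p.1 ≤ p.2 + k ∧ p.2 ≤ p.1 + k

/-- The collection `𝓔_𝓕` of banded entourages whose set of splitting points lies in `𝓕`. -/
def filterCoarse (𝓕 : Filter ℕ) : Set (Set (ℕ × ℕ)) :=
  {E | Banded E ∧ splitPoints E ∈ 𝓕}

lemma splitPoints_anti {E E' : Set (ℕ × ℕ)} (h : E ⊆ E') :
    splitPoints E' ⊆ splitPoints E := by
  intro n hn i j hi hj
  exact ⟨fun hm => (hn i j hi hj).1 (h hm), fun hm => (hn i j hi hj).2 (h hm)⟩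

/-- The witness entourage for a set `B`. -/
def witnessE (B : Set ℕ) : Set (ℕ × ℕ) :=
  {p | p.2 ∉ B ∧ 1 ≤ p.2 ∧ p.1 + 1 = p.2}

lemma banded_witnessE (B : Set ℕ) : Banded (witnessE B) := by
  refine ⟨1, fun p hp => ?_⟩
  obtain ⟨-, -, hp3⟩ := hp
  omega

lemma splitPoints_witnessE (B : Set ℕ) : splitPoints (witnessE B) = B ∪ {0} := by
  ext n
  constructor
  · intro hn
    by_contra hc
    simp only [Set.mem_union, Set.mem_singleton_iff, not_or] at hc
    obtain ⟨hnB, hn0⟩ := hc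
    have h1 : 1 ≤ n := Nat.one_le_iff_ne_zero.2 hn0
    exact (hn (n - 1) n (by omega) le_rfl).1 ⟨hnB, h1, by omega⟩
  · intro hn i j hi hj
    constructor
    · rintro ⟨hjB, hj1, hij⟩
      simp only at hjB hj1 hij
      have : n = j := by omega
      rcases hn with hB | h0
      · exact hjB (this ▸ hB)
      · simp only [Set.mem_singleton_iff] at h0; omega
    · rintro ⟨-, -, hij⟩
      simp only at hij
      omega

/-- If `𝓔_𝓕` has a countable cofinal subset, then `𝓕` is countably generated:
there is a countable family `{Aₙ} ⊆ 𝓕` such that every `B ∈ 𝓕` contains some `Aₙ`. -/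
theorem filter_countably_generated_of_countable_cofinal (𝓕 : Filter ℕ)
    (h : ∃ Es : ℕ → Set (ℕ × ℕ), (∀ n, Es n ∈ filterCoarse 𝓕) ∧
      ∀ E ∈ filterCoarse 𝓕, ∃ n, E ⊆ Es n) :
    ∃ As : ℕ → Set ℕ, (∀ n, As n ∈ 𝓕) ∧ ∀ B ∈ 𝓕, ∃ n, As n ⊆ B := by
  obtain ⟨Es, hEs, hcof⟩ := h
  have key : ∀ B ∈ 𝓕, ∃ n, splitPoints (Es n) ⊆ B ∪ {0} := by
    intro B hB
    have hmem : witnessE B ∈ filterCoarse 𝓕 := by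
      refine ⟨banded_witnessE B, ?_⟩
      rw [splitPoints_witnessE]
      exact Filter.mem_of_superset hB Set.subset_union_left
    obtain ⟨n, hn⟩ := hcof _ hmem
    exact ⟨n, (splitPoints_witnessE B) ▸ splitPoints_anti hn⟩
  by_cases h0 : ({0}ᶜ : Set ℕ) ∈ 𝓕
  · refine ⟨fun n => splitPoints (Es n) \ {0}, fun n => ?_, fun B hB => ?_⟩
    · exact Filter.inter_mem (hEs n).2 h0
    · obtain ⟨n, hn⟩ := key B hB
      refine ⟨n, fun x hx => ?_⟩
      rcases hn hx.1 with hB' | h0'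
      · exact hB'
      · exact absurd h0' hx.2
  · refine ⟨fun n => splitPoints (Es n), fun n => (hEs n).2, fun B hB => ?_⟩
    obtain ⟨n, hn⟩ := key B hB
    have h0B : (0 : ℕ) ∈ B := by
      by_contra hc
      exact h0 (Filter.mem_of_superset hB (fun x hx => by
        simp only [Set.mem_compl_iff, Set.mem_singleton_iff]
        rintro rfl; exact hc hx))
    refine ⟨n, fun x hx => ?_⟩
    rcases hn hx with hB' | h0'
    · exact hB'
    · exact h0' ▸ h0B
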